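/- For every s ≥ 2 and g(i) = lg(i)/s, there exists k (namely k = 2s+1) such that for every N there is a g-regressive coloring c : [N]² → ℕ with no homogeneous subset of size k. -/

import Mathlib

/-- `H` is homogeneous for the pair coloring `c`. -/
def Homog (c : ℕ → ℕ → ℕ) (H : Finset ℕ) : Prop :=
  ∀ m n m' n', m ∈ H → n ∈ H → m' ∈ H → n' ∈ H → m < n → m' < n' → c m n = c m' n'

/-- `d`-th digit of `x` in base `b`. -/
def dig (b d x : ℕ) : ℕ := x / b ^ d % b

lemma mod_eq_of_dig_eq (b : ℕ) {m n : ℕ} :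
    ∀ D : ℕ, (∀ d < D, dig b d m = dig b d n) → m % b ^ D = n % b ^ D := by
  intro D
  induction D with
  | zero => intro _; simp [Nat.mod_one]
  | succ D ih =>
    intro h
    have h1 : m % b ^ D = n % b ^ D := ih fun d hd => h d (hd.trans (Nat.lt_succ_self D))
    have h2 : dig b D m = dig b D n := h D (Nat.lt_succ_self D)
    have e1 : m % b ^ (D + 1) = m % b ^ D + b ^ D * (m / b ^ D % b) := by
      rw [pow_succ]; exact Nat.mod_mul
    have e2 : n % b ^ (D + 1) = n % b ^ D + b ^ D * (n / b ^ D % b) := by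
      rw [pow_succ]; exact Nat.mod_mul
    unfold dig at h2
    rw [e1, e2, h1, h2]

lemma eq_of_dig_eq {b : ℕ} (hb : 2 ≤ b) {m n D : ℕ} (hm : m < b ^ D) (hn : n < b ^ D)
    (h : ∀ d < D, dig b d m = dig b d n) : m = n := by
  have := mod_eq_of_dig_eq b D h
  rwa [Nat.mod_eq_of_lt hm, Nat.mod_eq_of_lt hn] at this

lemma exists_dig_ne {b : ℕ} (hb : 2 ≤ b) {m n : ℕ} (h : m ≠ n) :
    ∃ d, dig b d m ≠ dig b d n := by
  by_contra hc
  push_neg at hc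
  apply h
  have hD : ∀ x : ℕ, x ≤ m + n → x < b ^ (m + n + 1) := by
    intro x hx
    calc x < 2 ^ (m + n + 1) := by
          have := (m + n).lt_two_pow_self; omega
      _ ≤ b ^ (m + n + 1) := Nat.pow_le_pow_left hb _
  exact eq_of_dig_eq hb (hD m (by omega)) (hD n (by omega)) fun d _ => hc d

lemma log_pow_base (s m : ℕ) (hs : 1 ≤ s) : Nat.log (2 ^ s) m = Nat.log 2 m / s := by
  rcases Nat.eq_zero_or_pos m with rfl | hm
  · simp
  have hb : 1 < 2 ^ s := Nat.one_lt_two_pow_iff.mpr (by omega)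
  apply Nat.le_antisymm
  · rw [Nat.le_div_iff_mul_le (by omega),
      Nat.le_log_iff_pow_le Nat.one_lt_two (by omega), pow_mul']
    exact Nat.pow_log_le_self _ (by omega)
  · rw [Nat.le_log_iff_pow_le hb (by omega), ← pow_mul]
    have h1 : s * (Nat.log 2 m / s) ≤ Nat.log 2 m := by
      rw [Nat.mul_comm]; exact Nat.div_mul_le_self _ _
    calc 2 ^ (s * (Nat.log 2 m / s)) ≤ 2 ^ Nat.log 2 m :=
          Nat.pow_le_pow_right (by norm_num) h1
      _ ≤ m := Nat.pow_log_le_self _ (by omega)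

theorem stmt17 (s : ℕ) (hs : 2 ≤ s) (g : ℕ → ℕ) (hgdef : ∀ i, g i = Nat.log 2 i / s) :
    ∃ k : ℕ, ∀ N : ℕ, ∃ c : ℕ → ℕ → ℕ,
      (∀ m n, m < n → c m n ≤ g m) ∧
      ¬ ∃ H : Finset ℕ, H ⊆ Finset.range N ∧ H.card = k ∧ Homog c H := by
  set b := 2 ^ s with hbdef
  have hb : 2 ≤ b := by
    calc 2 = 2 ^ 1 := (pow_one 2).symm
    _ ≤ 2 ^ s := Nat.pow_le_pow_right (by norm_num) (by omega)
  refine ⟨2 * b + 1, fun N => ?_⟩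
  classical
  refine ⟨fun m n =>
    if h : m ≠ n ∧ Nat.log b m = Nat.log b n then
      Nat.find (exists_dig_ne hb h.1)
    else Nat.log b m, ?_, ?_⟩
  case refine_1 =>
    intro m n hmn
    show (if h : m ≠ n ∧ Nat.log b m = Nat.log b n then
      Nat.find (exists_dig_ne hb h.1) else Nat.log b m) ≤ g m
    have hlogg : Nat.log b m = g m := by
      rw [hgdef, hbdef, log_pow_base s m (by omega)]
    by_cases h : m ≠ n ∧ Nat.log b m = Nat.log b n
    · rw [dif_pos h, ← hlogg]
      -- least differing digit is ≤ log b m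
      by_contra hgt
      push_neg at hgt
      apply h.1
      apply eq_of_dig_eq hb (D := Nat.log b m + 1)
        (Nat.lt_pow_succ_log_self (by omega) m)
        (by rw [h.2]; exact Nat.lt_pow_succ_log_self (by omega) n)
      intro d hd
      by_contra hne
      have hle : Nat.find (exists_dig_ne hb h.1) ≤ d := Nat.find_le hne
      omega
    · rw [dif_neg h, hlogg]
  case refine_2 =>
    rintro ⟨H, hHN, hcard, hhom⟩
    obtain ⟨m0, hm0, n0, hn0, hmn0⟩ :=
      Finset.one_lt_card.mp (show 1 < H.card by omega)
    have hne : H.Nonempty := ⟨m0, hm0⟩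
    set M := H.max' hne with hM
    have hMH : M ∈ H := H.max'_mem hne
    obtain ⟨a, ha, b', hb', hab⟩ : ∃ a ∈ H, ∃ b' ∈ H, a < b' := by
      rcases lt_or_gt_of_ne hmn0 with h | h
      · exact ⟨m0, hm0, n0, hn0, h⟩
      · exact ⟨n0, hn0, m0, hm0, h⟩
    set v := (if h : a ≠ b' ∧ Nat.log b a = Nat.log b b' then
      Nat.find (exists_dig_ne hb h.1) else Nat.log b a) with hv
    have hcv : ∀ x ∈ H, ∀ y ∈ H, x < y →
        (if h : x ≠ y ∧ Nat.log b x = Nat.log b y then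
          Nat.find (exists_dig_ne hb h.1) else Nat.log b x) = v :=
      fun x hx y hy hxy => hhom x y a b' hx hy ha hb' hxy hab
    -- every element of H is in block v or in the block of M
    have hblock : ∀ x ∈ H, Nat.log b x = v ∨ Nat.log b x = Nat.log b M := by
      intro x hx
      by_cases hxM : x = M
      · right; rw [hxM]
      · have hxlt : x < M := lt_of_le_of_ne (H.le_max' x hx) hxM
        by_cases hl : Nat.log b x = Nat.log b M
        · right; exact hl
        · left
          have h := hcv x hx M hMH hxlt
          rwa [dif_neg (fun hh => hl hh.2)] at h
    -- within a block, elements of H have pairwise distinct digit v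
    have hdig : ∀ x ∈ H, ∀ y ∈ H, x < y → Nat.log b x = Nat.log b y →
        dig b v x ≠ dig b v y := by
      intro x hx y hy hxy hl
      have hne2 : x ≠ y := Nat.ne_of_lt hxy
      have hcxy := hcv x hx y hy hxy
      rw [dif_pos ⟨hne2, hl⟩] at hcxy
      have hspec := Nat.find_spec (exists_dig_ne hb hne2)
      rwa [hcxy] at hspec
    have hinj : ∀ w : ℕ, Set.InjOn (dig b v)
        ↑(H.filter (fun x => Nat.log b x = w)) := by
      intro w x hx y hy hxy
      simp only [Finset.coe_filter, Set.mem_setOf_eq] at hx hy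
      by_contra hne2
      rcases lt_or_gt_of_ne hne2 with h | h
      · exact hdig x hx.1 y hy.1 h (hx.2.trans hy.2.symm) hxy
      · exact hdig y hy.1 x hx.1 h (hy.2.trans hx.2.symm) hxy.symm
    have hcardf : ∀ w : ℕ, (H.filter (fun x => Nat.log b x = w)).card ≤ b := by
      intro w
      have h := Finset.card_le_card_of_injOn (dig b v)
        (fun x _ => Finset.mem_range.mpr (Nat.mod_lt _ (by omega))) (hinj w)
      simpa using h
    have hsub : H ⊆ H.filter (fun x => Nat.log b x = v) ∪
        H.filter (fun x => Nat.log b x = Nat.log b M) := by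
      intro x hx
      rcases hblock x hx with h | h
      · exact Finset.mem_union_left _ (Finset.mem_filter.mpr ⟨hx, h⟩)
      · exact Finset.mem_union_right _ (Finset.mem_filter.mpr ⟨hx, h⟩)
    have hle : H.card ≤ 2 * b := by
      calc H.card ≤ (H.filter (fun x => Nat.log b x = v) ∪
            H.filter (fun x => Nat.log b x = Nat.log b M)).card :=
            Finset.card_le_card hsub
        _ ≤ (H.filter (fun x => Nat.log b x = v)).card +
            (H.filter (fun x => Nat.log b x = Nat.log b M)).card :=
            Finset.card_union_le _ _
        _ ≤ b + b := Nat.add_le_add (hcardf v) (hcardf _)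
        _ = 2 * b := by ring
    omega
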